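/- For m, n ≥ 3 there is no real symmetric orthogonal matrix in S(K_m □ K_n); that is, q(K_m □ K_n) ≥ 3. -/

import Mathlib

open Matrix

/-- For `m, n ≥ 3` there is no real symmetric orthogonal matrix
whose off-diagonal zero pattern matches the adjacency of the Cartesian product
`K_m □ K_n`; that is, `q(K_m □ K_n) ≥ 3`. -/
theorem stmt_11 {m n : ℕ} (hm : 3 ≤ m) (hn : 3 ≤ n) :
    ¬ ∃ M : Matrix (Fin m × Fin n) (Fin m × Fin n) ℝ, M.IsSymm ∧ M * M = 1 ∧
      (∀ u v : Fin m × Fin n, u ≠ v →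
        (M u v ≠ 0 ↔ ((SimpleGraph.completeGraph (Fin m)).boxProd (SimpleGraph.completeGraph (Fin n))).Adj u v)) := by
  rintro ⟨M, hsym, hM2, hpat⟩
  set G := ((SimpleGraph.completeGraph (Fin m)).boxProd (SimpleGraph.completeGraph (Fin n))) with hG
  have hadj : ∀ (a a' : Fin m) (b b' : Fin n),
      G.Adj (a, b) (a', b') ↔ (a ≠ a' ∧ b = b') ∨ (b ≠ b' ∧ a = a') := by
    intro a a' b b'
    simp [hG, SimpleGraph.boxProd_adj, SimpleGraph.completeGraph]
  have hz : ∀ u v, u ≠ v → ¬ G.Adj u v → M u v = 0 := by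
    intro u v h1 h2
    by_contra h
    exact h2 ((hpat u v h1).1 h)
  have hnz : ∀ u v, G.Adj u v → M u v ≠ 0 := fun u v ha => (hpat u v ha.ne).2 ha
  -- key relation from (M²)_{(i,j),(i',j')} = 0 for i ≠ i', j ≠ j'
  have key : ∀ (i i' : Fin m), i ≠ i' → ∀ (j j' : Fin n), j ≠ j' →
      M (i, j) (i, j') * M (i, j') (i', j') = -(M (i, j) (i', j) * M (i', j) (i', j')) := by
    intro i i' hii j j' hjj
    have huv : ((i, j) : Fin m × Fin n) ≠ (i', j') := by
      simp only [ne_eq, Prod.mk.injEq, not_and]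
      intro h; exact absurd h hii
    have hMuv : M (i, j) (i', j') = 0 := by
      apply hz _ _ huv
      rw [hadj]
      rintro (⟨-, h⟩ | ⟨-, h⟩)
      · exact hjj h
      · exact hii h
    have h0 : (M * M) (i, j) (i', j') = 0 := by
      rw [hM2]
      exact Matrix.one_apply_ne huv
    rw [Matrix.mul_apply] at h0
    have hpair : ((i, j') : Fin m × Fin n) ≠ (i', j) := by
      simp only [ne_eq, Prod.mk.injEq, not_and]
      intro h; exact absurd h hii
    have hsub : ∑ w ∈ ({(i, j'), (i', j)} : Finset (Fin m × Fin n)),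
        M (i, j) w * M w (i', j') = ∑ w, M (i, j) w * M w (i', j') := by
      apply Finset.sum_subset (Finset.subset_univ _)
      intro w _ hw
      simp only [Finset.mem_insert, Finset.mem_singleton] at hw
      push_neg at hw
      obtain ⟨a, b⟩ := w
      by_cases h1 : ((i, j) : Fin m × Fin n) = (a, b)
      · rw [← h1, hMuv]; ring
      · by_cases h2 : ((a, b) : Fin m × Fin n) = (i', j')
        · rw [h2, hMuv]; ring
        · by_cases h3 : M (i, j) (a, b) = 0
          · rw [h3]; ring
          · by_cases h4 : M (a, b) (i', j') = 0
            · rw [h4]; ring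
            · exfalso
              have ha1 := (hpat _ _ h1).1 h3
              have ha2 := (hpat _ _ h2).1 h4
              rw [hadj] at ha1 ha2
              rcases ha1 with ⟨h5, h6⟩ | ⟨h5, h6⟩
              · subst h6
                rcases ha2 with ⟨h7, h8⟩ | ⟨h7, h8⟩
                · exact hjj h8
                · exact hw.2 (by rw [h8])
              · subst h6
                rcases ha2 with ⟨h7, h8⟩ | ⟨h7, h8⟩
                · exact hw.1 (by rw [h8])
                · exact hii h8
    rw [← hsub] at h0
    rw [Finset.sum_insert (by simpa using hpair), Finset.sum_singleton] at h0
    linarith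
  -- three distinct row and column indices
  have h0m : 0 < m := by omega
  have h1m : 1 < m := by omega
  have h2m : 2 < m := by omega
  have h0n : 0 < n := by omega
  have h1n : 1 < n := by omega
  have h2n : 2 < n := by omega
  set i1 : Fin m := ⟨0, h0m⟩
  set i2 : Fin m := ⟨1, h1m⟩
  set i3 : Fin m := ⟨2, h2m⟩
  set j1 : Fin n := ⟨0, h0n⟩
  set j2 : Fin n := ⟨1, h1n⟩
  set j3 : Fin n := ⟨2, h2n⟩
  have hi12 : i1 ≠ i2 := by simp [i1, i2, Fin.ext_iff]
  have hi23 : i2 ≠ i3 := by simp [i2, i3, Fin.ext_iff]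
  have hi31 : i3 ≠ i1 := by simp [i3, i1, Fin.ext_iff]
  have hj12 : j1 ≠ j2 := by simp [j1, j2, Fin.ext_iff]
  have hj23 : j2 ≠ j3 := by simp [j2, j3, Fin.ext_iff]
  have hj13 : j1 ≠ j3 := by simp [j1, j3, Fin.ext_iff]
  -- g j := product of three column-j entries; all nonzero
  have gne : ∀ j : Fin n,
      M (i1, j) (i2, j) * M (i2, j) (i3, j) * M (i3, j) (i1, j) ≠ 0 := by
    intro j
    have A := hnz (i1, j) (i2, j) ((hadj _ _ _ _).2 (Or.inl ⟨hi12, rfl⟩))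
    have B := hnz (i2, j) (i3, j) ((hadj _ _ _ _).2 (Or.inl ⟨hi23, rfl⟩))
    have C := hnz (i3, j) (i1, j) ((hadj _ _ _ _).2 (Or.inl ⟨hi31, rfl⟩))
    exact mul_ne_zero (mul_ne_zero A B) C
  -- g flips sign between any two distinct columns
  have hgg : ∀ j j' : Fin n, j ≠ j' →
      M (i1, j') (i2, j') * M (i2, j') (i3, j') * M (i3, j') (i1, j')
        = -(M (i1, j) (i2, j) * M (i2, j) (i3, j) * M (i3, j) (i1, j)) := by
    intro j j' hjj
    have e1 := key i1 i2 hi12 j j' hjj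
    have e2 := key i2 i3 hi23 j j' hjj
    have e3 := key i3 i1 hi31 j j' hjj
    have A1 := hnz (i1, j) (i1, j') ((hadj _ _ _ _).2 (Or.inr ⟨hjj, rfl⟩))
    have A2 := hnz (i2, j) (i2, j') ((hadj _ _ _ _).2 (Or.inr ⟨hjj, rfl⟩))
    have A3 := hnz (i3, j) (i3, j') ((hadj _ _ _ _).2 (Or.inr ⟨hjj, rfl⟩))
    have hA : M (i1, j) (i1, j') * M (i2, j) (i2, j') * M (i3, j) (i3, j') ≠ 0 :=
      mul_ne_zero (mul_ne_zero A1 A2) A3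
    apply mul_left_cancel₀ hA
    calc M (i1, j) (i1, j') * M (i2, j) (i2, j') * M (i3, j) (i3, j') *
          (M (i1, j') (i2, j') * M (i2, j') (i3, j') * M (i3, j') (i1, j'))
        = (M (i1, j) (i1, j') * M (i1, j') (i2, j')) *
          (M (i2, j) (i2, j') * M (i2, j') (i3, j')) *
          (M (i3, j) (i3, j') * M (i3, j') (i1, j')) := by ring
      _ = (-(M (i1, j) (i2, j) * M (i2, j) (i2, j'))) *
          (-(M (i2, j) (i3, j) * M (i3, j) (i3, j'))) *
          (-(M (i3, j) (i1, j) * M (i1, j) (i1, j'))) := by rw [e1, e2, e3]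
      _ = M (i1, j) (i1, j') * M (i2, j) (i2, j') * M (i3, j) (i3, j') *
          (-(M (i1, j) (i2, j) * M (i2, j) (i3, j) * M (i3, j) (i1, j))) := by ring
  have h12 := hgg j1 j2 hj12
  have h23 := hgg j2 j3 hj23
  have h13 := hgg j1 j3 hj13
  have : M (i1, j1) (i2, j1) * M (i2, j1) (i3, j1) * M (i3, j1) (i1, j1) = 0 := by
    linarith
  exact gne j1 this
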